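/- Let i < j with 0 < i and j < n be indices such that i is a lower reflex index, j is an upper reflex index, h_i − h_j > 2L, and the pair (l_i, u_j) is visible. Then the minimum of the set of β ≥ 0 for which there exists a continuous piecewise-linear function g : [t_i, t_j] → ℝ, affine with slope in {β, −β} on each piece of some finite partition, satisfying |g(t) − f(t)| ≤ L for all t ∈ [t_i, t_j], equals s(l_i, u_j) = (h_i − h_j − 2L)/(t_j − t_i); the minimum is attained by the affine function joining l_i = (t_i, h_i − L) to u_j = (t_j, h_j + L). -/
import Mathlib


/-- `PWLinSlope β a b g` : `g` is continuous piecewise-linear on `[a, b]`,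
affine with slope `β` or `-β` on each interval of some finite partition of `[a, b]`. -/
def PWLinSlope (β a b : ℝ) (g : ℝ → ℝ) : Prop :=
  ∃ m : ℕ, ∃ s : ℕ → ℝ, s 0 = a ∧ s m = b ∧ (∀ k < m, s k < s (k + 1)) ∧
    ∀ k < m, ∃ σ : ℝ, (σ = β ∨ σ = -β) ∧
      ∀ x ∈ Set.Icc (s k) (s (k + 1)), g x = g (s k) + σ * (x - s k)

/-- `Feasible a b L f β g` : `g` is a feasible `β`-path over `[a, b]` for the corridor of
half-width `L` around the α-path `f`. -/
def Feasible (a b L : ℝ) (f : ℝ → ℝ) (β : ℝ) (g : ℝ → ℝ) : Prop :=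
  PWLinSlope β a b g ∧ ∀ x ∈ Set.Icc a b, |g x - f x| ≤ L

lemma pwl_bound (β a b : ℝ) (g : ℝ → ℝ) (hβ : 0 ≤ β) (hpw : PWLinSlope β a b g) :
    |g b - g a| ≤ β * (b - a) := by
  obtain ⟨m, s, h0, hm, hlt, haff⟩ := hpw
  have key : ∀ k ≤ m, |g (s k) - g (s 0)| ≤ β * (s k - s 0) := by
    intro k
    induction k with
    | zero => intro _; simp
    | succ k ih =>
      intro hk
      have hk' : k < m := Nat.lt_of_succ_le hk
      obtain ⟨σ, hσ, hg⟩ := haff k hk'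
      have hlt' := hlt k hk'
      have e := hg (s (k + 1)) ⟨le_of_lt hlt', le_refl _⟩
      have hσabs : |σ| = β := by
        rcases hσ with h | h <;> simp [h, abs_of_nonneg hβ]
      have step : |g (s (k + 1)) - g (s 0)| ≤
          |g (s k) - g (s 0)| + |σ| * (s (k + 1) - s k) := by
        have : g (s (k + 1)) - g (s 0) = (g (s k) - g (s 0)) + σ * (s (k + 1) - s k) := by
          rw [e]; ring
        rw [this]
        calc |(g (s k) - g (s 0)) + σ * (s (k + 1) - s k)|
            ≤ |g (s k) - g (s 0)| + |σ * (s (k + 1) - s k)| := abs_add_le _ _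
          _ = |g (s k) - g (s 0)| + |σ| * (s (k + 1) - s k) := by
              rw [abs_mul, abs_of_nonneg (by linarith : (0:ℝ) ≤ s (k+1) - s k)]
      have ihk := ih (le_of_lt hk')
      calc |g (s (k + 1)) - g (s 0)| ≤ |g (s k) - g (s 0)| + |σ| * (s (k + 1) - s k) := step
        _ ≤ β * (s k - s 0) + β * (s (k + 1) - s k) := by rw [hσabs]; linarith
        _ = β * (s (k + 1) - s 0) := by ring
  have := key m le_rfl
  rwa [h0, hm] at this

theorem stmt_1
    (n : ℕ) (hn : 1 ≤ n) (t h : ℕ → ℝ) (α L : ℝ) (f : ℝ → ℝ)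
    (hα : 0 < α) (hL : 0 < L)
    (ht : ∀ i < n, t i < t (i + 1))
    (hslope : ∀ i < n,
      h (i + 1) - h i = α * (t (i + 1) - t i) ∨ h (i + 1) - h i = -α * (t (i + 1) - t i))
    (halt : ∀ i, i + 1 < n → (h (i + 2) - h (i + 1)) * (h (i + 1) - h i) < 0)
    (hf : ∀ i < n, ∀ x ∈ Set.Icc (t i) (t (i + 1)),
      f x = h i + (x - t i) * ((h (i + 1) - h i) / (t (i + 1) - t i)))
    (i j : ℕ) (hij : i < j) (hi0 : 0 < i) (hjn : j < n)
    (hlow : h (i - 1) < h i ∧ h (i + 1) < h i)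
    (hup : h j < h (j - 1) ∧ h j < h (j + 1))
    (hover : h i - h j > 2 * L)
    (hvis : ∀ x ∈ Set.Icc (t i) (t j),
      |((h i - L) + (x - t i) * (((h j + L) - (h i - L)) / (t j - t i))) - f x| ≤ L) :
    IsLeast {β : ℝ | 0 ≤ β ∧ ∃ g : ℝ → ℝ, PWLinSlope β (t i) (t j) g ∧
        ∀ x ∈ Set.Icc (t i) (t j), |g x - f x| ≤ L}
      ((h i - h j - 2 * L) / (t j - t i)) ∧
    PWLinSlope ((h i - h j - 2 * L) / (t j - t i)) (t i) (t j)
      (fun x => (h i - L) + (x - t i) * (((h j + L) - (h i - L)) / (t j - t i))) := by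
  -- monotonicity of t
  have tmono : ∀ q, ∀ p, p < q → q ≤ n → t p < t q := by
    intro q
    induction q with
    | zero => intro p hp _; exact absurd hp (Nat.not_lt_zero p)
    | succ q ih =>
      intro p hpq hqn
      have hq : q < n := Nat.lt_of_succ_le hqn
      rcases Nat.lt_succ_iff_lt_or_eq.mp hpq with hpq' | rfl
      · exact lt_trans (ih p hpq' (le_of_lt hq)) (ht q hq)
      · exact ht p hq
  have hin : i < n := lt_trans hij hjn
  have hab : t i < t j := tmono j i hij (le_of_lt hjn)
  have hba : (0:ℝ) < t j - t i := by linarith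
  set β₀ : ℝ := (h i - h j - 2 * L) / (t j - t i) with hβ₀
  have hβ₀pos : 0 < β₀ := div_pos (by linarith) hba
  -- f at endpoints
  have hfi : f (t i) = h i := by
    have := hf i hin (t i) ⟨le_rfl, le_of_lt (ht i hin)⟩
    simp at this; linarith [this]
  have hfj : f (t j) = h j := by
    have := hf j hjn (t j) ⟨le_rfl, le_of_lt (ht j hjn)⟩
    simp at this; linarith [this]
  -- the attaining affine function is PWLinSlope β₀
  have hpwl : PWLinSlope β₀ (t i) (t j)
      (fun x => (h i - L) + (x - t i) * (((h j + L) - (h i - L)) / (t j - t i))) := by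
    refine ⟨1, fun k => if k = 0 then t i else t j, by simp, by simp, ?_, ?_⟩
    · intro k hk
      interval_cases k
      simpa using hab
    · intro k hk
      interval_cases k
      refine ⟨-β₀, Or.inr rfl, ?_⟩
      intro x hx
      simp only [if_pos rfl, if_neg one_ne_zero] at hx ⊢
      have : -β₀ = ((h j + L) - (h i - L)) / (t j - t i) := by
        rw [hβ₀]; field_simp; ring
      rw [← this]; ring
  refine ⟨⟨⟨le_of_lt hβ₀pos, ⟨_, hpwl, hvis⟩⟩, ?_⟩, hpwl⟩
  rintro β ⟨hβ0, g, hpw, hcor⟩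
  have hbd := pwl_bound β (t i) (t j) g hβ0 hpw
  have hga : h i - L ≤ g (t i) := by
    have := hcor (t i) ⟨le_rfl, le_of_lt hab⟩
    rw [hfi] at this
    have := abs_le.mp this
    linarith [this.1]
  have hgb : g (t j) ≤ h j + L := by
    have := hcor (t j) ⟨le_of_lt hab, le_rfl⟩
    rw [hfj] at this
    have := abs_le.mp this
    linarith [this.2]
  have : h i - h j - 2 * L ≤ |g (t j) - g (t i)| := by
    have : h i - h j - 2 * L ≤ g (t i) - g (t j) := by linarith
    calc h i - h j - 2 * L ≤ g (t i) - g (t j) := this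
      _ ≤ |g (t i) - g (t j)| := le_abs_self _
      _ = |g (t j) - g (t i)| := abs_sub_comm _ _
  rw [hβ₀, div_le_iff₀ hba]
  linarith
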